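/- If a ≠ 0 and b(c−1) > 0, then the equilibrium set of the Lorenz system with parameters a, b, c consists of exactly the three points P₁ = (0,0,0), P₂ = (−√(b(c−1)), −√(b(c−1)), c−1), and P₃ = (√(b(c−1)), √(b(c−1)), c−1). -/
import Mathlib


def lorenz (a b c : ℝ) (p : Fin 3 → ℝ) : Fin 3 → ℝ :=
  ![a * (p 1 - p 0), c * p 0 - p 0 * p 2 - p 1, p 0 * p 1 - b * p 2]

def chen (a b c : ℝ) (p : Fin 3 → ℝ) : Fin 3 → ℝ :=
  ![a * (p 1 - p 0), (c - a) * p 0 - p 0 * p 2 + c * p 1, p 0 * p 1 - b * p 2]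

theorem lorenz_three_equilibria (a b c : ℝ) (ha : a ≠ 0) (hbc : b * (c - 1) > 0) :
    {p : Fin 3 → ℝ | lorenz a b c p = 0} =
      {![0, 0, 0],
       ![-Real.sqrt (b * (c - 1)), -Real.sqrt (b * (c - 1)), c - 1],
       ![Real.sqrt (b * (c - 1)), Real.sqrt (b * (c - 1)), c - 1]} := by
  have hsq : Real.sqrt (b * (c - 1)) ^ 2 = b * (c - 1) := Real.sq_sqrt hbc.le
  have hc1 : c - 1 ≠ 0 := by
    intro h; rw [h, mul_zero] at hbc; exact lt_irrefl 0 hbc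
  ext p
  have hp : p = ![p 0, p 1, p 2] := by
    ext i; fin_cases i <;> simp
  simp only [Set.mem_setOf_eq, Set.mem_insert_iff, Set.mem_singleton_iff]
  constructor
  · intro h
    have h0 : a * (p 1 - p 0) = 0 := congrFun h 0
    have h1 : c * p 0 - p 0 * p 2 - p 1 = 0 := congrFun h 1
    have h2 : p 0 * p 1 - b * p 2 = 0 := congrFun h 2
    have hyx : p 1 = p 0 := by
      rcases mul_eq_zero.1 h0 with h' | h'
      · exact absurd h' ha
      · linarith
    rw [hyx] at h1 h2
    have hfac : p 0 * (c - 1 - p 2) = 0 := by ring_nf; linarith [h1]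
    rcases mul_eq_zero.1 hfac with hx0 | hz
    · left
      have hz0 : p 2 = 0 := by
        have hb : b ≠ 0 := fun h => by rw [h, zero_mul] at hbc; exact lt_irrefl 0 hbc
        rw [hx0] at h2
        have h2' : b * p 2 = 0 := by linarith
        rcases mul_eq_zero.1 h2' with h' | h'
        · exact absurd h' hb
        · exact h'
      rw [hp, hx0, hyx, hx0, hz0]
    · have hz : p 2 = c - 1 := by linarith
      have hx2 : p 0 ^ 2 = b * (c - 1) := by rw [hz] at h2; nlinarith [h2]
      have : p 0 = Real.sqrt (b * (c - 1)) ∨ p 0 = -Real.sqrt (b * (c - 1)) := by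
        have hfac2 : (p 0 - Real.sqrt (b * (c - 1))) * (p 0 + Real.sqrt (b * (c - 1))) = 0 := by
          nlinarith [hsq, hx2]
        rcases mul_eq_zero.1 hfac2 with h' | h'
        · left; linarith
        · right; linarith
      rcases this with hpos | hneg
      · right; right; rw [hp, hyx, hpos, hz]
      · right; left; rw [hp, hyx, hneg, hz]
  · intro h
    rcases h with h | h | h <;> rw [h] <;> funext i <;> fin_cases i <;>
      simp [lorenz] <;> nlinarith [hsq]
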